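/- Let Ω ⊆ ℝ^d be an open bounded convex set and f : closure(Ω) × U → ℝ^d continuous, with U compact. Suppose there exists h > 0 such that for every x ∈ closure(Ω) there is u ∈ U with x + h·f(x,u) ∈ Ω. Then for every x on the boundary of Ω there exists u ∈ U such that f(x,u) ∈ int(T_{closure(Ω)}(x)). -/

import Mathlib

open Set Pointwise

theorem stmt3 {d m : ℕ} (Ω : Set (EuclideanSpace ℝ (Fin d)))
    (hΩo : IsOpen Ω) (hΩb : Bornology.IsBounded Ω) (hΩc : Convex ℝ Ω)
    (U : Set (Fin m → ℝ)) (hU : IsCompact U)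
    (f : EuclideanSpace ℝ (Fin d) → (Fin m → ℝ) → EuclideanSpace ℝ (Fin d))
    (hf : ContinuousOn (fun p : EuclideanSpace ℝ (Fin d) × (Fin m → ℝ) => f p.1 p.2)
      (closure Ω ×ˢ U))
    (h : ℝ) (hh : 0 < h)
    (hUh : ∀ x ∈ closure Ω, ∃ u ∈ U, x + h • f x u ∈ Ω) :
    ∀ x ∈ frontier Ω, ∃ u ∈ U,
      f x u ∈ interior (closure (⋃ t ∈ Set.Ioi (0 : ℝ),
        t⁻¹ • ((fun y => y - x) '' closure Ω))) := by
  intro x hx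
  obtain ⟨u, hu, hy⟩ := hUh x (frontier_subset_closure hx)
  refine ⟨u, hu, ?_⟩
  have hopen : IsOpen (h⁻¹ • ((fun y => y - x) '' Ω)) := by
    apply IsOpen.smul₀ _ (inv_ne_zero hh.ne')
    have : (fun y => y - x) '' Ω = (Homeomorph.subRight x) '' Ω := rfl
    rw [this]
    exact (Homeomorph.subRight x).isOpenMap Ω hΩo
  have hmem : f x u ∈ h⁻¹ • ((fun y => y - x) '' Ω) := by
    refine ⟨x + h • f x u - x, ⟨x + h • f x u, hy, rfl⟩, ?_⟩
    simp [smul_smul, inv_mul_cancel₀ hh.ne']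
  have hsub : h⁻¹ • ((fun y => y - x) '' Ω) ⊆
      closure (⋃ t ∈ Set.Ioi (0 : ℝ), t⁻¹ • ((fun y => y - x) '' closure Ω)) := by
    refine subset_trans ?_ subset_closure
    intro z hz
    refine mem_biUnion (show h ∈ Set.Ioi (0:ℝ) from hh) ?_
    exact smul_set_mono (image_mono subset_closure) hz
  exact mem_interior.mpr ⟨_, hsub, hopen, hmem⟩
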